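/- Let F be a field and m a positive integer that is invertible in F (i.e. (m : F) ≠ 0). Let V be an F-vector space and θ : V → V an F-linear endomorphism with θ^m = id. Then V is the internal direct sum, over the positive divisors d of m, of the subspaces ker(Φ_d(θ)), where Φ_d denotes the d-th cyclotomic polynomial with coefficients in F evaluated at θ. In particular, for distinct divisors d₁ ≠ d₂ of m the subspaces ker(Φ_{d₁}(θ)) and ker(Φ_{d₂}(θ)) intersect trivially, and together they span V. -/

import Mathlib

open Polynomial

private lemma ker_prod_eq_biSup {F : Type*} [Field F] {V : Type*} [AddCommGroup V] [Module F V]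
    (θ : Module.End F V) {ι : Type*} (q : ι → F[X]) (S : Finset ι)
    (hq : (S : Set ι).Pairwise (Function.onFun IsCoprime q)) :
    LinearMap.ker (aeval θ (∏ i ∈ S, q i)) = ⨆ i ∈ S, LinearMap.ker (aeval θ (q i)) := by
  classical
  induction S using Finset.induction_on with
  | empty => simp [Module.End.one_eq_id]
  | @insert a S ha ih =>
    have hpair : (S : Set ι).Pairwise (Function.onFun IsCoprime q) :=
      hq.mono (by simp [Finset.subset_insert])
    have hcop : IsCoprime (q a) (∏ i ∈ S, q i) :=
      IsCoprime.prod_right fun i hi =>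
        hq (by simp) (by simp [hi]) (fun h => ha (h ▸ hi))
    rw [Finset.prod_insert ha, ← sup_ker_aeval_eq_ker_aeval_mul_of_coprime θ hcop,
      ih hpair, Finset.iSup_insert]

theorem directSum_ker_cyclotomic_of_pow_eq_one
    (F : Type*) [Field F] (V : Type*) [AddCommGroup V] [Module F V]
    (m : ℕ) (hm : 0 < m) (hminv : (m : F) ≠ 0)
    (θ : Module.End F V) (hθ : θ ^ m = 1) :
    DirectSum.IsInternal
        (fun d : {d : ℕ // d ∈ m.divisors} =>
          LinearMap.ker (aeval θ (cyclotomic (d : ℕ) F))) ∧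
      (∀ d₁ ∈ m.divisors, ∀ d₂ ∈ m.divisors, d₁ ≠ d₂ →
        LinearMap.ker (aeval θ (cyclotomic d₁ F)) ⊓
          LinearMap.ker (aeval θ (cyclotomic d₂ F)) = ⊥) ∧
      (⨆ d ∈ m.divisors, LinearMap.ker (aeval θ (cyclotomic d F))) = ⊤ := by
  classical
  have hsep : (X ^ m - 1 : F[X]).Separable := X_pow_sub_one_separable_iff.mpr hminv
  -- pairwise coprimality
  have hcop : (↑m.divisors : Set ℕ).Pairwise (Function.onFun IsCoprime fun d => cyclotomic d F) := by
    intro d₁ h₁ d₂ h₂ hne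
    have hdvd : cyclotomic d₁ F * cyclotomic d₂ F ∣ X ^ m - 1 := by
      rw [← prod_cyclotomic_eq_X_pow_sub_one hm F]
      have hsub : ({d₁, d₂} : Finset ℕ) ⊆ m.divisors := by
        intro x hx
        rcases Finset.mem_insert.mp hx with h | h
        · exact h ▸ h₁
        · exact (Finset.mem_singleton.mp h) ▸ h₂
      have := Finset.prod_dvd_prod_of_subset _ _ (fun d => cyclotomic d F) hsub
      rwa [Finset.prod_pair hne] at this
    exact (hsep.of_dvd hdvd).isCoprime
  -- the top kernel
  have hker : LinearMap.ker (aeval θ ((X : F[X]) ^ m - 1)) = ⊤ := by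
    rw [map_sub, map_pow, aeval_X, map_one, hθ, sub_self, LinearMap.ker_zero]
  have hsup : (⨆ d ∈ m.divisors, LinearMap.ker (aeval θ (cyclotomic d F))) = ⊤ := by
    rw [← ker_prod_eq_biSup θ _ _ hcop, prod_cyclotomic_eq_X_pow_sub_one hm F, hker]
  -- independence
  have hindep : m.divisors.SupIndep fun d => LinearMap.ker (aeval θ (cyclotomic d F)) := by
    intro t ht d hd hdt
    rw [Finset.sup_eq_iSup, ← ker_prod_eq_biSup θ _ _ (hcop.mono (by exact_mod_cast ht))]
    refine disjoint_ker_aeval_of_isCoprime θ (IsCoprime.prod_right fun i hi => ?_)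
    exact hcop hd (ht hi) (fun h => hdt (h ▸ hi))
  refine ⟨DirectSum.isInternal_submodule_of_iSupIndep_of_iSup_eq_top
      hindep.independent ?_, ?_, hsup⟩
  · rw [iSup_subtype]
    exact hsup
  · intro d₁ h₁ d₂ h₂ hne
    exact disjoint_iff.mp (disjoint_ker_aeval_of_isCoprime θ (hcop h₁ h₂ hne))
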